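/- arXiv:2201.01357 — 3 statements merged into one kernel-verified Lean document; each statement's English description precedes it below -/
import Mathlib

section
/- Let F_1,...,F_G be symmetric positive semi-definite p×p matrices and λ > 0. The function k(β) = exp(-λ Σ_{g=1}^G sqrt(β^T F_g β)) on R^p is integrable if and only if the intersection of the null spaces of F_1,...,F_G is {0} (equivalently, the vertically stacked matrix [F_1; ...; F_G] has full column rank). -/
open MeasureTheory Matrix Metric Set

lemma integrable_exp_neg_mul_abs' {a : ℝ} (ha : 0 < a) :
    Integrable (fun x : ℝ => Real.exp (-a * |x|)) := by
  have hIoi : IntegrableOn (fun x : ℝ => Real.exp (-a * |x|)) (Ioi 0) := by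
    refine (exp_neg_integrableOn_Ioi 0 ha).congr_fun (fun x hx => ?_) measurableSet_Ioi
    rw [abs_of_pos hx]
  have hIic : IntegrableOn (fun x : ℝ => Real.exp (-a * |x|)) (Iic 0) := by
    rw [← Measure.map_neg_eq_self (volume : Measure ℝ)]
    have m : MeasurableEmbedding fun x : ℝ => -x :=
      (Homeomorph.neg ℝ).measurableEmbedding
    rw [m.integrableOn_map_iff]
    simp_rw [Function.comp_def, abs_neg, neg_preimage, neg_Iic, neg_zero]
    exact (integrableOn_Ici_iff_integrableOn_Ioi).mpr hIoi
  rw [← integrableOn_univ, ← Iic_union_Ioi (a := (0 : ℝ))]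
  exact hIic.union hIoi

/-- The structured-sparse kernel `exp(-λ Σ_g √(βᵀ F_g β))` is integrable on `ℝ^p`
iff the intersection of the null spaces of the PSD matrices `F_g` is trivial
(equivalently, the stacked matrix `[F_1; …; F_G]` has full column rank). -/
theorem stmt0 (p G : ℕ) (F : Fin G → Matrix (Fin p) (Fin p) ℝ)
    (hF : ∀ g, (F g).PosSemidef) (lam : ℝ) (hlam : 0 < lam) :
    Integrable
        (fun β : Fin p → ℝ =>
          Real.exp (-lam * ∑ g, Real.sqrt (β ⬝ᵥ (F g).mulVec β)))
        volume
      ↔ (∀ β : Fin p → ℝ, (∀ g, (F g).mulVec β = 0) → β = 0) := by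
  set Q : Fin G → (Fin p → ℝ) → ℝ := fun g β => β ⬝ᵥ (F g).mulVec β with hQdef
  set f : (Fin p → ℝ) → ℝ := fun β => ∑ g, Real.sqrt (Q g β) with hfdef
  set k : (Fin p → ℝ) → ℝ := fun β => Real.exp (-lam * f β) with hkdef
  have hQnn : ∀ g β, 0 ≤ Q g β := fun g β => by
    simpa using (hF g).dotProduct_mulVec_nonneg β
  have hfnn : ∀ β, 0 ≤ f β := fun β =>
    Finset.sum_nonneg fun g _ => Real.sqrt_nonneg _
  have hQcont : ∀ g, Continuous (Q g) := fun g =>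
    continuous_id.dotProduct (continuous_const.matrix_mulVec continuous_id)
  have hfcont : Continuous f :=
    continuous_finset_sum _ fun g _ => Real.continuous_sqrt.comp (hQcont g)
  have hkcont : Continuous k :=
    Real.continuous_exp.comp (continuous_const.mul hfcont)
  have hsym : ∀ g, (F g)ᵀ = F g := fun g => by
    rw [← conjTranspose_eq_transpose_of_trivial]; exact (hF g).1
  have hfsmul : ∀ (c : ℝ) (β : Fin p → ℝ), f (c • β) = |c| * f β := by
    intro c β
    rw [hfdef]
    simp only [Finset.mul_sum]
    refine Finset.sum_congr rfl fun g _ => ?_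
    have hq : Q g (c • β) = c ^ 2 * Q g β := by
      simp only [hQdef, mulVec_smul, smul_dotProduct, dotProduct_smul, smul_eq_mul]
      ring
    rw [hq, Real.sqrt_mul (sq_nonneg c), Real.sqrt_sq_eq_abs]
  constructor
  · -- integrable → trivial common null space
    intro hInt
    by_contra hns
    push_neg at hns
    obtain ⟨β₀, hβ₀null, hβ₀ne⟩ := hns
    have hinv : ∀ (x : Fin p → ℝ) (t : ℝ), f (x + t • β₀) = f x := by
      intro x t
      rw [hfdef]
      refine Finset.sum_congr rfl fun g _ => ?_
      congr 1
      have h1 : (F g) *ᵥ (x + t • β₀) = (F g) *ᵥ x := by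
        rw [mulVec_add, mulVec_smul, hβ₀null g, smul_zero, add_zero]
      have h2 : β₀ ⬝ᵥ ((F g) *ᵥ x) = 0 := by
        rw [dotProduct_mulVec, ← vecMul_transpose, hsym g, ← dotProduct_mulVec,
          ← mulVec_transpose, hsym g] at *
        rw [dotProduct_mulVec, ← mulVec_transpose, hsym g, hβ₀null g, zero_dotProduct]
      simp only [hQdef, h1, add_dotProduct, smul_dotProduct, smul_eq_mul, h2,
        mul_zero, add_zero]
    have hnβ₀ : 0 < ‖β₀‖ := norm_pos_iff.mpr hβ₀ne
    set r : ℝ := ‖β₀‖ / 2 with hrdef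
    have hr : 0 < r := by positivity
    -- bound f on the closed ball
    obtain ⟨M, hM⟩ := ((isCompact_closedBall (0 : Fin p → ℝ) r).bddAbove_image
      hfcont.continuousOn)
    have hMb : ∀ x ∈ closedBall (0 : Fin p → ℝ) r, f x ≤ M := fun x hx =>
      hM (Set.mem_image_of_mem f hx)
    set ε : ℝ := Real.exp (-lam * M) with hεdef
    have hε : 0 < ε := Real.exp_pos _
    set A : ℕ → Set (Fin p → ℝ) := fun n => ball ((n : ℝ) • β₀) r with hAdef
    have hklb : ∀ n, ∀ x ∈ A n, ε ≤ k x := by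
      intro n x hx
      have hx' : x - (n : ℝ) • β₀ ∈ closedBall (0 : Fin p → ℝ) r := by
        simp only [mem_closedBall, dist_zero_right]
        have := mem_ball_iff_norm.mp hx
        linarith
      have hfx : f x ≤ M := by
        have := hinv (x - (n : ℝ) • β₀) ((n : ℝ))
        rw [sub_add_cancel] at this
        rw [this]
        exact hMb _ hx'
      rw [hkdef, hεdef]
      exact Real.exp_le_exp.mpr (by nlinarith)
    have hdisj : Pairwise (Function.onFun Disjoint A) := by
      intro m n hmn
      have hdist : r + r ≤ dist ((m : ℝ) • β₀) ((n : ℝ) • β₀) := by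
        rw [dist_eq_norm, ← sub_smul, norm_smul, Real.norm_eq_abs]
        have h1 : (1 : ℝ) ≤ |(m : ℝ) - (n : ℝ)| := by
          have : ((m : ℤ) - (n : ℤ)) ≠ 0 := sub_ne_zero.mpr (by exact_mod_cast hmn)
          have := Int.one_le_abs this
          calc (1 : ℝ) ≤ |((m : ℤ) - (n : ℤ) : ℤ)| := by exact_mod_cast this
            _ = |(m : ℝ) - (n : ℝ)| := by push_cast; rfl
        have : ‖β₀‖ ≤ |(m : ℝ) - (n : ℝ)| * ‖β₀‖ := le_mul_of_one_le_left hnβ₀.le h1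
        rw [hrdef]; linarith
      exact ball_disjoint_ball hdist
    have hAmeas : ∀ n, MeasurableSet (A n) := fun n => measurableSet_ball
    have hvol : ∀ n, volume (A n) = volume (ball (0 : Fin p → ℝ) r) := fun n =>
      Measure.addHaar_ball_center volume _ _
    have hkm : Measurable fun x => (‖k x‖₊ : ENNReal) :=
      hkcont.measurable.nnnorm.coe_nnreal_ennreal
    have key : ∀ n : ℕ,
        ENNReal.ofReal ε * volume (ball (0 : Fin p → ℝ) r) ≤ ∫⁻ x in A n, ‖k x‖₊ := by
      intro n
      calc ENNReal.ofReal ε * volume (ball (0 : Fin p → ℝ) r)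
          = ∫⁻ _ in A n, ENNReal.ofReal ε := by rw [setLIntegral_const, hvol n]
        _ ≤ ∫⁻ x in A n, ‖k x‖₊ := by
            refine setLIntegral_mono hkm fun x hx => ?_
            exact le_trans (ENNReal.ofReal_le_ofReal (hklb n x hx))
              (le_of_eq (Real.enorm_eq_ofReal (Real.exp_pos _).le).symm)
    have htot : (∑' n : ℕ, ∫⁻ x in A n, (‖k x‖₊ : ENNReal)) ≤ ∫⁻ x, ‖k x‖₊ := by
      rw [← lintegral_iUnion hAmeas hdisj]
      exact setLIntegral_le_lintegral _ _
    have htop : (∑' _ : ℕ, ENNReal.ofReal ε * volume (ball (0 : Fin p → ℝ) r)) = ⊤ :=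
      ENNReal.tsum_const_eq_top_of_ne_zero (by
        refine mul_ne_zero ?_ ?_
        · simpa using hε
        · exact (measure_ball_pos volume _ hr).ne')
    have hfin : (∫⁻ x, (‖k x‖₊ : ENNReal)) < ⊤ := hInt.2
    have : (⊤ : ENNReal) ≤ ∫⁻ x, ‖k x‖₊ := by
      rw [← htop]
      exact le_trans (ENNReal.tsum_le_tsum key) htot
    exact absurd (lt_of_le_of_lt this hfin) (lt_irrefl _)
  · -- trivial common null space → integrable
    intro hnull
    have hpos : ∀ β : Fin p → ℝ, β ≠ 0 → 0 < f β := by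
      intro β hβ
      rcases (hfnn β).lt_or_eq with h | h
      · exact h
      · exfalso
        apply hβ
        apply hnull
        intro g
        have hterm : ∀ g ∈ Finset.univ, Real.sqrt (Q g β) = 0 :=
          (Finset.sum_eq_zero_iff_of_nonneg
            (fun g _ => Real.sqrt_nonneg _)).mp h.symm
        have hq0 : Q g β = 0 := by
          have := hterm g (Finset.mem_univ g)
          have hle := Real.sqrt_eq_zero'.mp this
          exact le_antisymm hle (hQnn g β)
        have := ((hF g).dotProduct_mulVec_zero_iff β).mp (by
          simpa [star_trivial] using hq0)
        exact this
    obtain ⟨c, hc, hle⟩ : ∃ c > 0, ∀ β : Fin p → ℝ, c * (∑ i, |β i|) ≤ f β := by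
      rcases Nat.eq_zero_or_pos p with hp | hp
      · refine ⟨1, one_pos, fun β => ?_⟩
        subst hp
        simpa using hfnn β
      · haveI : Nonempty (Fin p) := Fin.pos_iff_nonempty.mp hp
        haveI : Nontrivial (Fin p → ℝ) := Function.nontrivial
        have hS : (sphere (0 : Fin p → ℝ) 1).Nonempty :=
          NormedSpace.sphere_nonempty.mpr zero_le_one
        obtain ⟨β₁, hβ₁S, hmin⟩ :=
          (isCompact_sphere (0 : Fin p → ℝ) 1).exists_isMinOn hS hfcont.continuousOn
        have hβ₁ : ‖β₁‖ = 1 := by simpa using hβ₁S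
        have hβ₁ne : β₁ ≠ 0 := by
          intro h
          rw [h, norm_zero] at hβ₁
          exact one_ne_zero hβ₁.symm
        have hm : 0 < f β₁ := hpos β₁ hβ₁ne
        refine ⟨f β₁ / p, by positivity, fun β => ?_⟩
        by_cases hβ : β = 0
        · subst hβ
          simpa using hfnn 0
        · have hnβ : 0 < ‖β‖ := norm_pos_iff.mpr hβ
          have hmem : ‖β‖⁻¹ • β ∈ sphere (0 : Fin p → ℝ) 1 := by
            simp [norm_smul, abs_of_pos (inv_pos.mpr hnβ), inv_mul_cancel₀ hnβ.ne']
          have h2 : f β₁ ≤ f (‖β‖⁻¹ • β) := hmin hmem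
          have h1 : f (‖β‖⁻¹ • β) = ‖β‖⁻¹ * f β := by
            rw [hfsmul, abs_of_pos (inv_pos.mpr hnβ)]
          have h3 : (∑ i, |β i|) ≤ (p : ℝ) * ‖β‖ := by
            calc (∑ i, |β i|) ≤ ∑ _i : Fin p, ‖β‖ :=
                  Finset.sum_le_sum fun i _ => by
                    simpa [Real.norm_eq_abs] using norm_le_pi_norm β i
              _ = (p : ℝ) * ‖β‖ := by
                  simp [Finset.sum_const, Finset.card_univ, mul_comm]
          have hp' : (0 : ℝ) < p := by exact_mod_cast hp
          have hfb : f β₁ * ‖β‖ ≤ f β := by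
            rw [h1] at h2
            calc f β₁ * ‖β‖ ≤ (‖β‖⁻¹ * f β) * ‖β‖ := by nlinarith
              _ = f β := by field_simp
          calc f β₁ / p * (∑ i, |β i|) ≤ f β₁ / p * ((p : ℝ) * ‖β‖) := by
                apply mul_le_mul_of_nonneg_left h3 (by positivity)
            _ = f β₁ * ‖β‖ := by field_simp
            _ ≤ f β := hfb
    refine Integrable.mono'
      (g := fun β : Fin p → ℝ => ∏ i, Real.exp (-(lam * c) * |β i|))
      (Integrable.fintype_prod fun _ => integrable_exp_neg_mul_abs' (by positivity))
      hkcont.aestronglyMeasurable ?_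
    filter_upwards with β
    rw [Real.norm_eq_abs, abs_of_pos (Real.exp_pos _), ← Real.exp_sum]
    apply Real.exp_le_exp.mpr
    have hcs : c * (∑ i, |β i|) ≤ f β := hle β
    have : (∑ i, -(lam * c) * |β i|) = -lam * (c * ∑ i, |β i|) := by
      rw [← Finset.mul_sum]; ring
    rw [this]
    nlinarith
end

section
/- Consider the structured sparse prior with kernel k(β) = exp(-λ Σ_{g=1}^G sqrt(β^T F_g β)) for a factorial design with J factors each having L_j levels, including all main effects and all two-way interactions, where the penalties encourage all pairwise fusions of levels within each factor. Then, restricted to the linear subspace defined by the ANOVA sum-to-zero constraints C^T β = 0, the prior is proper (has finite integral over that subspace). -/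
open MeasureTheory Matrix

/-- Index of a main-effect coefficient `β^j_l`. -/
def MainIdx (J : ℕ) (L : Fin J → ℕ) := Σ j : Fin J, Fin (L j)

/-- Index of an ordered pair of factors `j < j'`. -/
def PairIdx (J : ℕ) := {pr : Fin J × Fin J // pr.1 < pr.2}

/-- Index of an interaction coefficient `β^{jj'}_{ll'}` for `j < j'`. -/
def InterIdx (J : ℕ) (L : Fin J → ℕ) :=
  Σ pr : PairIdx J, Fin (L pr.1.1) × Fin (L pr.1.2)

/-- Index of the full coefficient vector (main effects and two-way interactions). -/
def Idx (J : ℕ) (L : Fin J → ℕ) := MainIdx J L ⊕ InterIdx J L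

instance (J : ℕ) : Fintype (PairIdx J) := by
  unfold PairIdx; infer_instance

instance (J : ℕ) (L : Fin J → ℕ) : Fintype (Idx J L) := by
  unfold Idx MainIdx InterIdx PairIdx; infer_instance

/-- The quadratic form `βᵀ F_g β` for the fusion group `g = (j, l₁, l₂)`:
the squared difference of the main effects of levels `l₁, l₂` of factor `j`
plus the squared differences of all interaction coefficients involving
factor `j` at those two levels. -/
def fusionQuad {J : ℕ} {L : Fin J → ℕ} (β : Idx J L → ℝ) (j : Fin J)
    (l₁ l₂ : Fin (L j)) : ℝ :=
  (β (Sum.inl ⟨j, l₁⟩) - β (Sum.inl ⟨j, l₂⟩)) ^ 2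
    + ∑ pr : PairIdx J,
        (if h : pr.1.1 = j then
          ∑ m : Fin (L pr.1.2),
            (β (Sum.inr ⟨pr, (Fin.cast (congrArg L h).symm l₁, m)⟩)
              - β (Sum.inr ⟨pr, (Fin.cast (congrArg L h).symm l₂, m)⟩)) ^ 2
        else 0)
    + ∑ pr : PairIdx J,
        (if h : pr.1.2 = j then
          ∑ m : Fin (L pr.1.1),
            (β (Sum.inr ⟨pr, (m, Fin.cast (congrArg L h).symm l₁)⟩)
              - β (Sum.inr ⟨pr, (m, Fin.cast (congrArg L h).symm l₂)⟩)) ^ 2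
        else 0)

/-- The structured sparse penalty `Σ_g √(βᵀ F_g β)`, summing over all factors
`j` and all pairs of levels `l₁ < l₂` of factor `j`. -/
noncomputable def fusionPenalty {J : ℕ} {L : Fin J → ℕ} (β : Idx J L → ℝ) : ℝ :=
  ∑ j : Fin J, ∑ pl : {pl : Fin (L j) × Fin (L j) // pl.1 < pl.2},
    Real.sqrt (fusionQuad β j pl.1.1 pl.1.2)

/-- The ANOVA sum-to-zero constraint set `{β : Cᵀβ = 0}`. -/
def sumToZero (J : ℕ) (L : Fin J → ℕ) : Set (Idx J L → ℝ) :=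
  {β | (∀ j : Fin J, ∑ l, β (Sum.inl ⟨j, l⟩) = 0) ∧
       (∀ pr : PairIdx J, ∀ l' : Fin (L pr.1.2),
          ∑ l, β (Sum.inr ⟨pr, (l, l')⟩) = 0)}


section AuxLemmas

open Set

variable {J : ℕ} {L : Fin J → ℕ}

lemma integrable_exp_neg_abs {a : ℝ} (ha : 0 < a) :
    Integrable (fun x : ℝ => Real.exp (-(a * |x|))) := by
  have h1 : IntegrableOn (fun x : ℝ => Real.exp (-(a * |x|))) (Set.Ioi 0) := by
    refine (exp_neg_integrableOn_Ioi 0 ha).congr_fun (fun x hx => ?_) measurableSet_Ioi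
    rw [abs_of_pos hx]; simp only [neg_mul]
  have h2 : IntegrableOn (fun x : ℝ => Real.exp (-(a * |x|))) (Set.Iic 0) := by
    rw [← Measure.map_neg_eq_self (volume : Measure ℝ)]
    have m : MeasurableEmbedding fun x : ℝ => -x := (Homeomorph.neg ℝ).measurableEmbedding
    rw [m.integrableOn_map_iff]
    simp_rw [Function.comp_def, abs_neg, neg_preimage, neg_Iic, neg_zero]
    exact Iff.mpr integrableOn_Ici_iff_integrableOn_Ioi h1
  have := h2.union h1
  rwa [Set.Iic_union_Ioi, integrableOn_univ] at this

lemma fusionQuad_nonneg (β : Idx J L → ℝ) (j : Fin J) (l₁ l₂ : Fin (L j)) :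
    0 ≤ fusionQuad β j l₁ l₂ := by
  unfold fusionQuad
  refine add_nonneg (add_nonneg (sq_nonneg _) ?_) ?_ <;>
    refine Finset.sum_nonneg fun pr _ => ?_ <;>
    · split
      · exact Finset.sum_nonneg fun m _ => sq_nonneg _
      · exact le_refl 0

lemma fusionPenalty_nonneg (β : Idx J L → ℝ) : 0 ≤ fusionPenalty β :=
  Finset.sum_nonneg fun _ _ => Finset.sum_nonneg fun _ _ => Real.sqrt_nonneg _

lemma smul_app_aux (t x y : ℝ) : (t * x - t * y) ^ 2 = t ^ 2 * (x - y) ^ 2 := by ring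

lemma fusionQuad_smul (t : ℝ) (β : Idx J L → ℝ) (j : Fin J) (l₁ l₂ : Fin (L j)) :
    fusionQuad (t • β) j l₁ l₂ = t ^ 2 * fusionQuad β j l₁ l₂ := by
  unfold fusionQuad
  simp only [Pi.smul_apply, smul_eq_mul, mul_add, Finset.mul_sum, mul_dite, mul_zero]
  congr 1
  · congr 1
    · exact smul_app_aux t _ _
    · refine Finset.sum_congr rfl fun pr _ => ?_
      split
      · exact Finset.sum_congr rfl fun m _ => by exact smul_app_aux t _ _
      · rfl
  · refine Finset.sum_congr rfl fun pr _ => ?_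
    split
    · exact Finset.sum_congr rfl fun m _ => by exact smul_app_aux t _ _
    · rfl

lemma fusionPenalty_smul (t : ℝ) (β : Idx J L → ℝ) :
    fusionPenalty (t • β) = |t| * fusionPenalty β := by
  unfold fusionPenalty
  simp only [Finset.mul_sum]
  refine Finset.sum_congr rfl fun j _ => Finset.sum_congr rfl fun pl _ => ?_
  rw [fusionQuad_smul, Real.sqrt_mul (sq_nonneg t), Real.sqrt_sq_eq_abs]

lemma continuous_fusionPenalty : Continuous (fusionPenalty (J := J) (L := L)) := by
  unfold fusionPenalty fusionQuad
  refine continuous_finset_sum _ fun j _ => continuous_finset_sum _ fun pl _ => ?_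
  refine Real.continuous_sqrt.comp ?_
  refine ((Continuous.add ?_ ?_).add ?_)
  · fun_prop
  · refine continuous_finset_sum _ fun pr _ => ?_
    split
    · fun_prop
    · exact continuous_const
  · refine continuous_finset_sum _ fun pr _ => ?_
    split
    · fun_prop
    · exact continuous_const

lemma fin_cast_self {n : ℕ} (h : n = n) (l : Fin n) : Fin.cast h l = l := rfl

lemma fusionQuad_eq_zero_parts {β : Idx J L → ℝ} {j : Fin J} {l₁ l₂ : Fin (L j)}
    (h : fusionQuad β j l₁ l₂ = 0) :
    β (Sum.inl ⟨j, l₁⟩) = β (Sum.inl ⟨j, l₂⟩) ∧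
    ∀ pr : PairIdx J, ∀ hpr : pr.1.1 = j, ∀ m : Fin (L pr.1.2),
      β (Sum.inr ⟨pr, (Fin.cast (congrArg L hpr).symm l₁, m)⟩)
        = β (Sum.inr ⟨pr, (Fin.cast (congrArg L hpr).symm l₂, m)⟩) := by
  unfold fusionQuad at h
  have hA : (0:ℝ) ≤ (β (Sum.inl ⟨j, l₁⟩) - β (Sum.inl ⟨j, l₂⟩)) ^ 2 := sq_nonneg _
  have hB : (0:ℝ) ≤ ∑ pr : PairIdx J,
      (if h : pr.1.1 = j then
        ∑ m : Fin (L pr.1.2),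
          (β (Sum.inr ⟨pr, (Fin.cast (congrArg L h).symm l₁, m)⟩)
            - β (Sum.inr ⟨pr, (Fin.cast (congrArg L h).symm l₂, m)⟩)) ^ 2
      else 0) := by
    refine Finset.sum_nonneg fun pr _ => ?_
    split
    · exact Finset.sum_nonneg fun m _ => sq_nonneg _
    · exact le_refl 0
  have hC : (0:ℝ) ≤ ∑ pr : PairIdx J,
      (if h : pr.1.2 = j then
        ∑ m : Fin (L pr.1.1),
          (β (Sum.inr ⟨pr, (m, Fin.cast (congrArg L h).symm l₁)⟩)
            - β (Sum.inr ⟨pr, (m, Fin.cast (congrArg L h).symm l₂)⟩)) ^ 2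
      else 0) := by
    refine Finset.sum_nonneg fun pr _ => ?_
    split
    · exact Finset.sum_nonneg fun m _ => sq_nonneg _
    · exact le_refl 0
  have hA0 : (β (Sum.inl ⟨j, l₁⟩) - β (Sum.inl ⟨j, l₂⟩)) ^ 2 = 0 := by linarith
  have hB0 : ∑ pr : PairIdx J,
      (if h : pr.1.1 = j then
        ∑ m : Fin (L pr.1.2),
          (β (Sum.inr ⟨pr, (Fin.cast (congrArg L h).symm l₁, m)⟩)
            - β (Sum.inr ⟨pr, (Fin.cast (congrArg L h).symm l₂, m)⟩)) ^ 2
      else 0) = 0 := by linarith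
  constructor
  · have := (pow_eq_zero_iff two_ne_zero).mp hA0
    linarith [sub_eq_zero.mp this]
  · intro pr hpr m
    have h1 := (Finset.sum_eq_zero_iff_of_nonneg (fun pr _ => by
        split
        · exact Finset.sum_nonneg fun m _ => sq_nonneg _
        · exact le_refl 0)).mp hB0 pr (Finset.mem_univ pr)
    rw [dif_pos hpr] at h1
    have h2 := (Finset.sum_eq_zero_iff_of_nonneg
        (fun m _ => sq_nonneg _)).mp h1 m (Finset.mem_univ m)
    have := (pow_eq_zero_iff two_ne_zero).mp h2
    linarith [sub_eq_zero.mp this]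

lemma eq_zero_of_fusionPenalty_eq_zero {β : Idx J L → ℝ}
    (hβ : β ∈ sumToZero J L) (h : fusionPenalty β = 0) : β = 0 := by
  have hterm : ∀ j : Fin J, ∀ pl : {pl : Fin (L j) × Fin (L j) // pl.1 < pl.2},
      fusionQuad β j pl.1.1 pl.1.2 = 0 := by
    intro j pl
    have h1 := (Finset.sum_eq_zero_iff_of_nonneg
        (fun j _ => Finset.sum_nonneg fun pl _ => Real.sqrt_nonneg _)).mp h j
        (Finset.mem_univ j)
    have h2 := (Finset.sum_eq_zero_iff_of_nonneg
        (fun pl _ => Real.sqrt_nonneg _)).mp h1 pl (Finset.mem_univ pl)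
    exact le_antisymm (Real.sqrt_eq_zero'.mp h2) (fusionQuad_nonneg β j pl.1.1 pl.1.2)
  -- main effects are pairwise equal within a factor
  have hmain : ∀ j : Fin J, ∀ l₁ l₂ : Fin (L j),
      β (Sum.inl ⟨j, l₁⟩) = β (Sum.inl ⟨j, l₂⟩) := by
    intro j l₁ l₂
    rcases lt_trichotomy l₁ l₂ with hlt | heq | hgt
    · exact (fusionQuad_eq_zero_parts (hterm j ⟨(l₁, l₂), hlt⟩)).1
    · rw [heq]
    · exact ((fusionQuad_eq_zero_parts (hterm j ⟨(l₂, l₁), hgt⟩)).1).symm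
  have hinter : ∀ pr : PairIdx J, ∀ m : Fin (L pr.1.2), ∀ l₁ l₂ : Fin (L pr.1.1),
      β (Sum.inr ⟨pr, (l₁, m)⟩) = β (Sum.inr ⟨pr, (l₂, m)⟩) := by
    intro pr m l₁ l₂
    rcases lt_trichotomy l₁ l₂ with hlt | heq | hgt
    · exact (fusionQuad_eq_zero_parts (hterm pr.1.1 ⟨(l₁, l₂), hlt⟩)).2 pr rfl m
    · rw [heq]
    · exact ((fusionQuad_eq_zero_parts (hterm pr.1.1 ⟨(l₂, l₁), hgt⟩)).2 pr rfl m).symm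
  funext i
  match i with
  | Sum.inl ⟨j, l⟩ =>
    have hsum := hβ.1 j
    have : ∑ l' : Fin (L j), β (Sum.inl ⟨j, l'⟩)
        = (L j : ℝ) * β (Sum.inl ⟨j, l⟩) := by
      rw [Finset.sum_congr rfl fun l' _ => hmain j l' l]
      simp [Finset.card_univ, mul_comm]
    rw [this] at hsum
    have hL : (L j : ℝ) ≠ 0 := Nat.cast_ne_zero.mpr l.pos.ne'
    have := mul_eq_zero.mp hsum
    exact (by simpa [hL] using this : _ = (0:ℝ))
  | Sum.inr ⟨pr, (l, m)⟩ =>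
    have hsum := hβ.2 pr m
    have : ∑ l' : Fin (L pr.1.1), β (Sum.inr ⟨pr, (l', m)⟩)
        = (L pr.1.1 : ℝ) * β (Sum.inr ⟨pr, (l, m)⟩) := by
      rw [Finset.sum_congr rfl fun l' _ => hinter pr m l' l]
      simp [Finset.card_univ, mul_comm]
    rw [this] at hsum
    have hL : (L pr.1.1 : ℝ) ≠ 0 := Nat.cast_ne_zero.mpr l.pos.ne'
    have := mul_eq_zero.mp hsum
    exact (by simpa [hL] using this : _ = (0:ℝ))

end AuxLemmas

/-- Propriety of the structured sparse prior: restricted to the subspace defined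
by the ANOVA sum-to-zero constraints (parameterized by any basis `B` of that
subspace), the kernel `exp(-λ Σ_g √(βᵀ F_g β))` has finite integral. -/
theorem stmt6 (J : ℕ) (L : Fin J → ℕ) (lam : ℝ) (hlam : 0 < lam)
    (r : ℕ) (B : Matrix (Idx J L) (Fin r) ℝ)
    (hinj : Function.Injective B.mulVec)
    (hrange : Set.range B.mulVec = sumToZero J L) :
    Integrable
      (fun x : Fin r → ℝ => Real.exp (-lam * fusionPenalty (B.mulVec x)))
      volume := by
  classical
  -- the function f(x) = fusionPenalty (B.mulVec x)
  set f : (Fin r → ℝ) → ℝ := fun x => fusionPenalty (B.mulVec x) with hf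
  have hfcont : Continuous f := by
    have hB : Continuous fun x : Fin r → ℝ => B.mulVec x :=
      LinearMap.continuous_of_finiteDimensional (Matrix.mulVecLin B)
    exact continuous_fusionPenalty.comp hB
  have hfnonneg : ∀ x, 0 ≤ f x := fun x => fusionPenalty_nonneg _
  have hfsmul : ∀ (t : ℝ) (x : Fin r → ℝ), f (t • x) = |t| * f x := by
    intro t x
    simp only [hf]
    rw [Matrix.mulVec_smul, fusionPenalty_smul]
  have hfpos : ∀ x : Fin r → ℝ, x ≠ 0 → 0 < f x := by
    intro x hx
    rcases lt_or_eq_of_le (hfnonneg x) with h | h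
    · exact h
    exfalso
    have hmem : B.mulVec x ∈ sumToZero J L := by
      rw [← hrange]; exact ⟨x, rfl⟩
    have hz : B.mulVec x = 0 := eq_zero_of_fusionPenalty_eq_zero hmem h.symm
    have : B.mulVec x = B.mulVec 0 := by rw [hz, Matrix.mulVec_zero]
    exact hx (hinj this)
  rcases Nat.eq_zero_or_pos r with hr | hr
  · -- r = 0 : finite measure space, bounded function
    subst hr
    have hsub : Subsingleton (Fin 0 → ℝ) := ⟨fun a b => funext fun i => i.elim0⟩
    have : (fun x : Fin 0 → ℝ => Real.exp (-lam * fusionPenalty (B.mulVec x)))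
        = fun _ : Fin 0 → ℝ => Real.exp (-lam * fusionPenalty (B.mulVec 0)) := by
      funext x
      rw [hsub.elim x 0]
    rw [this]
    exact integrable_const _
  · -- r > 0 : minimum of f on the unit sphere gives a linear lower bound
    haveI : Nonempty (Fin r) := Fin.pos_iff_nonempty.mp hr
    have hne : (Metric.sphere (0 : Fin r → ℝ) 1).Nonempty := by
      exact NormedSpace.sphere_nonempty.mpr zero_le_one
    obtain ⟨x₀, hx₀s, hx₀min'⟩ :=
      (isCompact_sphere (0 : Fin r → ℝ) 1).exists_isMinOn hne hfcont.continuousOn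
    have hx₀min : ∀ u ∈ Metric.sphere (0 : Fin r → ℝ) 1, f x₀ ≤ f u :=
      fun u hu => hx₀min' hu
    have hx₀norm : ‖x₀‖ = 1 := by simpa using hx₀s
    have hx₀ne : x₀ ≠ 0 := fun h => by simp [h] at hx₀norm
    set c : ℝ := f x₀ with hc
    have hcpos : 0 < c := hfpos x₀ hx₀ne
    -- f x ≥ c * ‖x‖ for all x
    have hlow : ∀ x : Fin r → ℝ, c * ‖x‖ ≤ f x := by
      intro x
      rcases eq_or_ne x 0 with h | h
      · subst h
        have : f 0 = 0 := by
          have := hfsmul 0 0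
          simpa using this
        simp [this]
      · have hnx : (0:ℝ) < ‖x‖ := norm_pos_iff.mpr h
        set u : Fin r → ℝ := ‖x‖⁻¹ • x with hu
        have hus : u ∈ Metric.sphere (0 : Fin r → ℝ) 1 := by
          simp [hu, norm_smul, abs_of_pos (inv_pos.mpr hnx), inv_mul_cancel₀ hnx.ne']
        have hxu : x = ‖x‖ • u := by
          rw [hu, smul_smul, mul_inv_cancel₀ hnx.ne', one_smul]
        have hfx : f x = ‖x‖ * f u := by
          nth_rewrite 1 [hxu]
          rw [hfsmul, abs_of_pos hnx]
        rw [hfx]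
        have := hx₀min u hus
        calc c * ‖x‖ = ‖x‖ * c := mul_comm _ _
          _ ≤ ‖x‖ * f u := by
            exact mul_le_mul_of_nonneg_left this hnx.le
    -- dominate by a product of one-dimensional integrable functions
    set a : ℝ := lam * c / r with ha
    have hrR : (0:ℝ) < (r:ℝ) := by exact_mod_cast hr
    have hapos : 0 < a := div_pos (mul_pos hlam hcpos) hrR
    have hgint : Integrable (fun x : Fin r → ℝ =>
        ∏ i : Fin r, Real.exp (-(a * |x i|))) volume := by
      exact Integrable.fintype_prod fun i => integrable_exp_neg_abs hapos
    refine hgint.mono' ?_ ?_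
    · exact (Real.continuous_exp.comp
        ((continuous_const.mul hfcont))).aestronglyMeasurable
    · refine Filter.Eventually.of_forall fun x => ?_
      rw [Real.norm_eq_abs, abs_of_pos (Real.exp_pos _)]
      rw [← Real.exp_sum]
      apply Real.exp_le_exp.mpr
      have hsumabs : ∑ i : Fin r, |x i| ≤ (r : ℝ) * ‖x‖ := by
        calc ∑ i : Fin r, |x i| ≤ ∑ _i : Fin r, ‖x‖ := by
              refine Finset.sum_le_sum fun i _ => ?_
              simpa [Real.norm_eq_abs] using norm_le_pi_norm x i
          _ = (r : ℝ) * ‖x‖ := by simp [mul_comm]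
      have h1 : ∑ i : Fin r, -(a * |x i|) = -(a * ∑ i : Fin r, |x i|) := by
        simp [Finset.mul_sum]
      rw [h1]
      have h2 : a * ∑ i : Fin r, |x i| ≤ lam * (c * ‖x‖) := by
        calc a * ∑ i : Fin r, |x i| ≤ a * ((r : ℝ) * ‖x‖) :=
              mul_le_mul_of_nonneg_left hsumabs hapos.le
          _ = lam * (c * ‖x‖) := by
              rw [ha]; field_simp
      have h3 : lam * (c * ‖x‖) ≤ lam * f x :=
        mul_le_mul_of_nonneg_left (hlow x) hlam.le
      have hfeq : fusionPenalty (B.mulVec x) = f x := rfl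
      rw [hfeq]
      linarith
end

section
/- For any b in R, the identity (e^ψ)^y / (1 + e^ψ) = (1/2) e^{(y - 1/2)ψ} ∫_0^∞ e^{-ω ψ²/2} f_{PG}(ω | 1, 0) dω holds for y in {0,1}, where f_{PG}(· | 1, 0) is the Polya-Gamma(1,0) density; equivalently, 1/(1+e^ψ) · e^{yψ} equals (1/2) e^{(y-1/2)ψ} E_{ω ~ PG(1,0)}[e^{-ω ψ²/2}]. -/
open MeasureTheory

/-- Polya-Gamma data-augmentation identity: if `ν` is the PG(1,0) distribution,
characterized by its Laplace-type transform `∫ e^{-ω t²/2} dν(ω) = cosh(t/2)⁻¹`,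
then for `y ∈ {0,1}` and any `ψ`,
`(e^ψ)^y / (1 + e^ψ) = (1/2) e^{(y - 1/2)ψ} ∫ e^{-ω ψ²/2} dν(ω)`. -/
theorem stmt11 (ν : Measure ℝ) [IsProbabilityMeasure ν]
    (hlap : ∀ t : ℝ, (∫ ω, Real.exp (-(ω * t ^ 2) / 2) ∂ν) = (Real.cosh (t / 2))⁻¹)
    (y : ℝ) (hy : y = 0 ∨ y = 1) (ψ : ℝ) :
    Real.exp ψ ^ y / (1 + Real.exp ψ)
      = (1 / 2) * Real.exp ((y - 1 / 2) * ψ)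
          * ∫ ω, Real.exp (-(ω * ψ ^ 2) / 2) ∂ν := by
  rw [hlap, Real.cosh_eq]
  have hpos : 0 < Real.exp (ψ / 2) + Real.exp (-(ψ / 2)) :=
    by positivity
  have h1 : (0:ℝ) < 1 + Real.exp ψ := by positivity
  have hsplit : Real.exp ψ = Real.exp (ψ / 2) * Real.exp (ψ / 2) := by
    rw [← Real.exp_add]; ring_nf
  have hinv : Real.exp (-(ψ / 2)) * Real.exp (ψ / 2) = 1 := by
    rw [← Real.exp_add]; ring_nf; exact Real.exp_zero
  rcases hy with rfl | rfl
  · rw [Real.rpow_zero]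
    have : (-(1:ℝ) / 2) * ψ = -(ψ/2) := by ring
    field_simp
    rw [show ((2:ℝ)*0-1)*ψ/2 = -(ψ/2) from by ring]
    nlinarith [hsplit, hinv, Real.exp_pos (ψ/2), Real.exp_pos (-(ψ/2))]
  · rw [Real.rpow_one]
    field_simp
    rw [show ((2:ℝ)-1)*ψ/2 = ψ/2 from by ring]
    nlinarith [hsplit, hinv, Real.exp_pos (ψ/2), Real.exp_pos (-(ψ/2))]
end
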